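/- Let (W, S) be a finite Coxeter system, w ∈ W, s = (s₁,…,s_l) a word in S, and 1 ≤ j ≤ l. The following are equivalent: (a) there exists a reduced subexpression of s for w avoiding position j; (b) there exists a sequence of positions t avoiding j with δ((s_i)_{i∈t}) = w; (c) the Demazure product δ((s₁,…,ŝ_j,…,s_l)) of the word with position j deleted is ≥ w in Bruhat order. -/

import Mathlib

/-- The Demazure product `δ(q)` of a word `q = (q₁, …, q_l)` in the simple reflections,
defined via the 0-Hecke relations (`H_{q₁} ⋯ H_{q_l} = H_{δ(q)}`): multiplying left to
right, a letter is used exactly when it increases the length. -/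
noncomputable def demazureProd {B W : Type*} [Group W] {M : CoxeterMatrix B}
    (cs : CoxeterSystem M W) (q : List B) : W :=
  q.foldl (fun w i => if cs.length w < cs.length (w * cs.simple i)
    then w * cs.simple i else w) 1

/-- Bruhat order on `W`, via the subword property: `u ≤ w` iff some reduced word for `w`
contains a subword that is a reduced word for `u`. -/
def bruhatLE {B W : Type*} [Group W] {M : CoxeterMatrix B}
    (cs : CoxeterSystem M W) (u w : W) : Prop :=
  ∃ lw : List B, cs.IsReduced lw ∧ cs.wordProd lw = w ∧
    ∃ lu : List B, lu.Sublist lw ∧ cs.IsReduced lu ∧ cs.wordProd lu = u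


open CoxeterSystem List
open scoped Classical

namespace StmtAux

variable {B W : Type*} [Group W] {M : CoxeterMatrix B} (cs : CoxeterSystem M W)

local prefix:100 "s" => cs.simple
local prefix:100 "π" => cs.wordProd
local prefix:100 "ℓ" => cs.length

noncomputable def permFun (i : B) : W × ZMod 2 → W × ZMod 2 :=
  fun p => (s i * p.1 * s i, p.2 + if p.1 = s i then 1 else 0)

lemma conj_simple_eq_iff (i : B) (t : W) : s i * t * s i = s i ↔ t = s i := by
  constructor
  · intro h
    have := congrArg (fun x => s i * x * s i) h
    simpa [mul_assoc, cs.simple_mul_simple_cancel_left, cs.simple_mul_simple_cancel_right] using this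
  · rintro rfl; simp [cs.simple_mul_simple_self, mul_assoc]

lemma permFun_invol (i : B) : Function.Involutive (permFun cs i) := by
  rintro ⟨t, e⟩
  simp only [permFun]
  refine Prod.ext ?_ ?_
  · show s i * (s i * t * s i) * s i = t
    calc s i * (s i * t * s i) * s i = (s i * s i) * t * (s i * s i) := by group
    _ = t := by rw [cs.simple_mul_simple_self]; group
  · show e + (if t = s i then 1 else 0) + (if s i * t * s i = s i then 1 else 0) = e
    rw [conj_simple_eq_iff cs]
    by_cases h : t = s i
    · have h2 : (1 + 1 : ZMod 2) = 0 := by decide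
      simp only [h, if_pos rfl, if_true]
      rw [add_assoc]
      norm_num
      decide
    · simp [h]

noncomputable def permF (i : B) : Equiv.Perm (W × ZMod 2) := (permFun_invol cs i).toPerm

@[simp] lemma permF_apply (i : B) (p : W × ZMod 2) :
    permF cs i p = (s i * p.1 * s i, p.2 + if p.1 = s i then 1 else 0) := rfl

lemma prod_map_permF (ω : List B) (t : W) (e : ZMod 2) :
    ((ω.map (permF cs)).prod) (t, e)
      = (π ω * t * (π ω)⁻¹, e + ((cs.rightInvSeq ω).count t : ZMod 2)) := by
  induction ω with
  | nil => simp
  | cons i ω ih =>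
      rw [map_cons, prod_cons, Equiv.Perm.mul_apply, ih, permF_apply]
      refine Prod.ext ?_ ?_
      · show s i * (π ω * t * (π ω)⁻¹) * s i = π (i :: ω) * t * (π (i :: ω))⁻¹
        rw [cs.wordProd_cons]
        simp only [mul_inv_rev, cs.inv_simple]
        group
      · show e + ((cs.rightInvSeq ω).count t : ZMod 2)
            + (if π ω * t * (π ω)⁻¹ = s i then 1 else 0)
            = e + ((cs.rightInvSeq (i :: ω)).count t : ZMod 2)
        have hris : cs.rightInvSeq (i :: ω) = ((π ω)⁻¹ * s i * π ω) :: cs.rightInvSeq ω := rfl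
        have hcond : (π ω * t * (π ω)⁻¹ = s i) ↔ (t = (π ω)⁻¹ * s i * π ω) := by
          constructor
          · intro h; rw [← h]; group
          · intro h; rw [h]; group
        rw [hris, count_cons]
        by_cases h : t = (π ω)⁻¹ * s i * π ω
        · simp only [hcond, h, if_pos rfl, if_true, eq_self_iff_true, beq_iff_eq]
          have : cs.wordProd ω * ((cs.wordProd ω)⁻¹ * cs.simple i * cs.wordProd ω) * (cs.wordProd ω)⁻¹ = cs.simple i := by group
          simp [hcond, h, this, add_assoc, Nat.cast_add]
        · have h' : ¬((cs.wordProd ω)⁻¹ * cs.simple i * cs.wordProd ω = t) := fun hh => h hh.symm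
          simp [hcond, h, h', add_assoc]


section S2
variable {B W : Type*} [Group W] {M : CoxeterMatrix B} (cs : CoxeterSystem M W)

local prefix:100 "s" => cs.simple
local prefix:100 "π" => cs.wordProd
local prefix:100 "ℓ" => cs.length

lemma alt_two_step (i i' : B) (k : ℕ) :
    alternatingWord i i' (2 * (k + 1)) = i :: i' :: alternatingWord i i' (2 * k) := by
  have h1 : 2 * (k + 1) = (2 * k + 1) + 1 := by ring
  rw [h1, alternatingWord_succ' i i' (2 * k + 1), alternatingWord_succ' i i' (2 * k)]
  have : ¬ Even (2 * k + 1) := by simp [Nat.even_add_one]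
  simp [this, Nat.even_add_one]

lemma prod_alt_even (i i' : B) (k : ℕ) :
    π (alternatingWord i i' (2 * k)) = (s i * s i') ^ k := by
  rw [cs.prod_alternatingWord_eq_mul_pow]
  simp [Nat.mul_div_cancel_left]

lemma prod_map_permF_alt (i i' : B) (k : ℕ) :
    ((alternatingWord i i' (2 * k)).map (permF cs)).prod = (permF cs i * permF cs i') ^ k := by
  induction k with
  | zero => simp [alternatingWord]
  | succ k ih =>
      rw [alt_two_step, map_cons, map_cons, prod_cons, prod_cons, ih, pow_succ']
      rw [mul_assoc]

lemma semiconj_simple (i i' : B) :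
    SemiconjBy (s i') (s i * s i') (s i' * s i) := by
  show s i' * (s i * s i') = (s i' * s i) * s i'
  group

lemma count_ris_alt (i i' : B) (n : ℕ) (t : W) :
    (cs.rightInvSeq (alternatingWord i i' (2 * n))).count t
      = ∑ j ∈ Finset.range (2 * n), (if t = (s i' * s i) ^ j * s i' then 1 else 0) := by
  induction n with
  | zero => simp [alternatingWord]
  | succ n ih =>
      have hy : ((s i * s i') ^ n)⁻¹ = (s i' * s i) ^ n := by
        rw [← inv_pow]
        congr 1
        simp [mul_inv_rev, cs.inv_simple]
      have hsemi := (semiconj_simple cs i i').pow_right n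
      rw [alt_two_step]
      have hris : cs.rightInvSeq (i :: i' :: alternatingWord i i' (2 * n))
          = ((π (i' :: alternatingWord i i' (2 * n)))⁻¹ * s i * π (i' :: alternatingWord i i' (2 * n)))
            :: ((π (alternatingWord i i' (2 * n)))⁻¹ * s i' * π (alternatingWord i i' (2 * n)))
            :: cs.rightInvSeq (alternatingWord i i' (2 * n)) := rfl
      rw [hris]
      have hprod := prod_alt_even cs i i' n
      have he2 : (π (alternatingWord i i' (2 * n)))⁻¹ * s i' * π (alternatingWord i i' (2 * n))
          = (s i' * s i) ^ (2 * n) * s i' := by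
        rw [hprod, hy]
        calc (s i' * s i) ^ n * s i' * (s i * s i') ^ n
            = (s i' * s i) ^ n * (s i' * (s i * s i') ^ n) := by rw [mul_assoc]
          _ = (s i' * s i) ^ n * ((s i' * s i) ^ n * s i') := by rw [hsemi.eq]
          _ = (s i' * s i) ^ (2 * n) * s i' := by rw [← mul_assoc, ← pow_add]; ring_nf
      have he1 : (π (i' :: alternatingWord i i' (2 * n)))⁻¹ * s i * π (i' :: alternatingWord i i' (2 * n))
          = (s i' * s i) ^ (2 * n + 1) * s i' := by
        rw [cs.wordProd_cons, hprod]
        rw [mul_inv_rev, cs.inv_simple, hy]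
        calc (s i' * s i) ^ n * s i' * s i * (s i' * (s i * s i') ^ n)
            = (s i' * s i) ^ n * (s i' * s i) * (s i' * (s i * s i') ^ n) := by group
          _ = (s i' * s i) ^ n * (s i' * s i) * ((s i' * s i) ^ n * s i') := by rw [hsemi.eq]
          _ = (s i' * s i) ^ (n + 1 + n) * s i' := by
              rw [← pow_succ, ← mul_assoc, ← pow_add]
          _ = (s i' * s i) ^ (2 * n + 1) * s i' := by ring_nf
      have hsplit : 2 * (n + 1) = (2 * n) + 1 + 1 := by ring
      rw [count_cons, count_cons, ih, he1, he2, hsplit, Finset.sum_range_succ,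
        Finset.sum_range_succ]
      simp only [beq_iff_eq]
      by_cases h1 : t = (s i' * s i) ^ (2 * n) * s i' <;>
        by_cases h2 : t = (s i' * s i) ^ (2 * n + 1) * s i' <;>
          simp [h1, h2, eq_comm] <;> omega

lemma permF_liftable : M.IsLiftable (permF cs) := by
  intro i i'
  rcases Nat.eq_zero_or_pos (M i i') with h0 | hpos
  · rw [h0, pow_zero]
  · set m := M i i' with hm
    rw [← prod_map_permF_alt]
    have h1 : π (alternatingWord i i' (2 * m)) = 1 := by
      rw [prod_alt_even, hm, cs.simple_mul_simple_pow]
    have key : ∀ (t : W) (e : ZMod 2),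
        ((alternatingWord i i' (2 * m)).map (permF cs)).prod (t, e) = (t, e) := by
      intro t e
      have h2 : (cs.rightInvSeq (alternatingWord i i' (2 * m))).count t
          = 2 * ∑ j ∈ Finset.range m, (if t = (s i' * s i) ^ j * s i' then 1 else 0) := by
        have hm1 : (s i' * s i) ^ m = 1 := cs.simple_mul_simple_pow' i i'
        rw [count_ris_alt, two_mul m, Finset.sum_range_add, two_mul]
        congr 1
        refine Finset.sum_congr rfl fun j _ => ?_
        rw [pow_add, hm1, one_mul]
      have hc : ∀ k : ℕ, ((2 * k : ℕ) : ZMod 2) = 0 := by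
        intro k
        push_cast
        have h3 : (2 : ZMod 2) = 0 := by decide
        rw [h3, zero_mul]
      rw [prod_map_permF, h1, h2, hc]
      simp
    refine Equiv.ext fun p => ?_
    have := key p.1 p.2
    simpa using this

noncomputable def permRep : W →* Equiv.Perm (W × ZMod 2) := cs.lift ⟨permF cs, permF_liftable cs⟩

lemma permRep_wordProd (ω : List B) :
    permRep cs (π ω) = ((ω.map (permF cs)).prod) := by
  induction ω with
  | nil => simp [CoxeterSystem.wordProd, permRep]
  | cons i ω ih =>
      rw [cs.wordProd_cons, map_mul, ih, List.map_cons, prod_cons]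
      congr 1
      exact cs.lift_apply_simple (permF_liftable cs) i

lemma count_ris_parity {ω ω' : List B} (h : π ω = π ω') (t : W) :
    ((cs.rightInvSeq ω).count t : ZMod 2) = ((cs.rightInvSeq ω').count t : ZMod 2) := by
  have h2 : ((ω.map (permF cs)).prod) (t, 0) = ((ω'.map (permF cs)).prod) (t, 0) := by
    rw [← permRep_wordProd, ← permRep_wordProd, h]
  rw [prod_map_permF, prod_map_permF] at h2
  have := congrArg Prod.snd h2
  simpa using this

end S2

section S3
variable {B W : Type*} [Group W] {M : CoxeterMatrix B} (cs : CoxeterSystem M W)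

local prefix:100 "s" => cs.simple
local prefix:100 "π" => cs.wordProd
local prefix:100 "ℓ" => cs.length

lemma ris_append (ω ω' : List B) :
    cs.rightInvSeq (ω ++ ω')
      = (cs.rightInvSeq ω).map (fun t => (π ω')⁻¹ * t * π ω') ++ cs.rightInvSeq ω' := by
  induction ω with
  | nil => simp
  | cons i ω ih =>
      have h1 : cs.rightInvSeq ((i :: ω) ++ ω')
          = (π (ω ++ ω'))⁻¹ * s i * π (ω ++ ω') :: cs.rightInvSeq (ω ++ ω') := rfl
      have h2 : cs.rightInvSeq (i :: ω) = (π ω)⁻¹ * s i * π ω :: cs.rightInvSeq ω := rfl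
      rw [h1, h2, ih, List.map_cons]
      rw [cs.wordProd_append, mul_inv_rev]
      simp only [List.cons_append]
      congr 1
      group

lemma lis_eq_map_conj (υ : List B) :
    cs.leftInvSeq υ = (cs.rightInvSeq υ).map (fun t => π υ * t * (π υ)⁻¹) := by
  induction υ with
  | nil => simp
  | cons i υ ih =>
      have h2 : cs.rightInvSeq (i :: υ) = (π υ)⁻¹ * s i * π υ :: cs.rightInvSeq υ := rfl
      have h3 : cs.leftInvSeq (i :: υ)
          = s i :: (cs.leftInvSeq υ).map (MulAut.conj (s i)) := rfl
      rw [h3, h2, ih, List.map_cons, List.map_map]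
      congr 1
      · rw [cs.wordProd_cons, mul_inv_rev]
        group
      · refine List.map_congr_left fun t _ => ?_
        simp only [Function.comp_apply, MulAut.conj_apply, cs.wordProd_cons, mul_inv_rev]
        group

lemma conj_mul_injective (a b : W) : Function.Injective (fun x : W => a * x * b) := by
  intro x y h
  simpa using mul_left_cancel (mul_right_cancel h : a * x = a * y)

lemma count_ris_palindrome (υ : List B) (i : B) :
    (cs.rightInvSeq (υ ++ i :: υ.reverse)).count (π υ * s i * (π υ)⁻¹)
      = 2 * ((cs.rightInvSeq υ).count (s i)) + 1 := by
  set t := π υ * s i * (π υ)⁻¹ with ht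
  have hπ : π (i :: υ.reverse) = s i * (π υ)⁻¹ := by
    rw [cs.wordProd_cons, cs.wordProd_reverse]
  rw [ris_append, List.count_append]
  have hmap : ((cs.rightInvSeq υ).map
      (fun x => (π (i :: υ.reverse))⁻¹ * x * π (i :: υ.reverse))).count t
      = (cs.rightInvSeq υ).count (s i) := by
    have h1 : t = (fun x => (π (i :: υ.reverse))⁻¹ * x * π (i :: υ.reverse)) (s i) := by
      rw [hπ, ht]
      group
    rw [h1]
    exact List.count_map_of_injective _ _ (conj_mul_injective _ _) _
  have hris2 : cs.rightInvSeq (i :: υ.reverse)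
      = (π υ.reverse)⁻¹ * s i * π υ.reverse :: cs.rightInvSeq υ.reverse := rfl
  have hhead : (π υ.reverse)⁻¹ * s i * π υ.reverse = t := by
    rw [cs.wordProd_reverse, inv_inv, ht]
  have hrev : (cs.rightInvSeq υ.reverse).count t = (cs.rightInvSeq υ).count (s i) := by
    rw [cs.rightInvSeq_reverse, List.count_reverse, lis_eq_map_conj]
    have h1 : t = (fun x => π υ * x * (π υ)⁻¹) (s i) := rfl
    rw [h1]
    exact List.count_map_of_injective _ _ (conj_mul_injective _ _) _
  rw [hmap, hris2, List.count_cons, hrev, hhead]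
  simp only [if_pos rfl, beq_self_eq_true, if_true]
  ring
end S3

section S4
variable {B W : Type*} [Group W] {M : CoxeterMatrix B} (cs : CoxeterSystem M W)

local prefix:100 "s" => cs.simple
local prefix:100 "π" => cs.wordProd
local prefix:100 "ℓ" => cs.length

theorem mem_ris_of_isRightInversion (ω : List B) {t : W} (ht : cs.IsReflection t)
    (hlt : ℓ (π ω * t) < ℓ (π ω)) : t ∈ cs.rightInvSeq ω := by
  have htinv : t * t = 1 := ht.mul_self
  obtain ⟨v, i, htvi⟩ := ht
  obtain ⟨υ, hυ⟩ := cs.wordProd_surjective v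
  obtain ⟨ω₁, hred1, hprod1⟩ := cs.exists_reduced_word' (π ω * t)
  set τ : List B := υ ++ i :: υ.reverse with hτ
  have hπτ : π τ = t := by
    rw [hτ, cs.wordProd_append, cs.wordProd_cons, cs.wordProd_reverse, hυ, htvi, ← mul_assoc]
  have hω₀ : π (ω₁ ++ τ) = π ω := by
    rw [cs.wordProd_append, hπτ, ← hprod1, mul_assoc, htinv, mul_one]
  have hcnt0 : (cs.rightInvSeq ω₁).count t = 0 := by
    rw [List.count_eq_zero]
    intro hmem
    have := (cs.isRightInversion_of_mem_rightInvSeq hred1 hmem).2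
    rw [← hprod1, mul_assoc, htinv, mul_one] at this
    omega
  have hcnt : (cs.rightInvSeq (ω₁ ++ τ)).count t = 2 * ((cs.rightInvSeq υ).count (s i)) + 1 := by
    rw [ris_append, List.count_append]
    have hmap : ((cs.rightInvSeq ω₁).map (fun x => (π τ)⁻¹ * x * π τ)).count t = 0 := by
      have h1 : t = (fun x => (π τ)⁻¹ * x * π τ) t := by
        rw [hπτ]
        show t = t⁻¹ * t * t
        group
      rw [h1, List.count_map_of_injective _ _ (conj_mul_injective _ _), hcnt0]
    rw [hmap, zero_add, hτ]
    have : t = π υ * s i * (π υ)⁻¹ := by rw [htvi, hυ]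
    rw [this, count_ris_palindrome]
  have hpar := count_ris_parity cs hω₀.symm t
  rw [hcnt] at hpar
  have : ((cs.rightInvSeq ω).count t : ZMod 2) = 1 := by
    rw [hpar]
    push_cast
    have h2 : (2 : ZMod 2) = 0 := by decide
    rw [h2]
    ring
  have hne : (cs.rightInvSeq ω).count t ≠ 0 := by
    intro h0
    rw [h0] at this
    simp at this
  exact List.count_pos_iff.mp (Nat.pos_of_ne_zero hne)

theorem strong_exchange (ω : List B) {t : W} (ht : cs.IsReflection t)
    (hlt : ℓ (π ω * t) < ℓ (π ω)) :
    ∃ k, k < ω.length ∧ π (ω.eraseIdx k) = π ω * t := by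
  have hmem := mem_ris_of_isRightInversion cs ω ht hlt
  obtain ⟨k, hk, hkt⟩ := List.mem_iff_getElem.mp hmem
  have hk' : k < ω.length := by simpa using hk
  refine ⟨k, hk', ?_⟩
  rw [← cs.wordProd_mul_getD_rightInvSeq ω k]
  congr 1
  rw [List.getD_eq_getElem _ 1 hk, hkt]

end S4

section S5
variable {B W : Type*} [Group W] {M : CoxeterMatrix B} (cs : CoxeterSystem M W)

local prefix:100 "s" => cs.simple
local prefix:100 "π" => cs.wordProd
local prefix:100 "ℓ" => cs.length

lemma isReduced_nil : cs.IsReduced ([] : List B) := by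
  simp [CoxeterSystem.IsReduced]

lemma isReduced_append_left {ω ω' : List B} (h : cs.IsReduced (ω ++ ω')) :
    cs.IsReduced ω := by
  have := h.take ω.length
  rwa [List.take_left] at this

lemma isReduced_concat_iff (ω : List B) (i : B) :
    cs.IsReduced (ω ++ [i]) ↔ cs.IsReduced ω ∧ ℓ (π ω * s i) = ℓ (π ω) + 1 := by
  have hπ : π (ω ++ [i]) = π ω * s i := by
    rw [cs.wordProd_append, cs.wordProd_singleton]
  constructor
  · intro h
    have h1 : cs.IsReduced ω := isReduced_append_left cs h
    refine ⟨h1, ?_⟩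
    have h2 : ℓ (π (ω ++ [i])) = ω.length + 1 := by
      rw [h]; simp
    rw [hπ] at h2
    rw [h2, h1]
  · rintro ⟨h1, h2⟩
    unfold CoxeterSystem.IsReduced
    rw [hπ, h2, h1]
    simp

theorem exists_reduced_sublist_aux :
    ∀ n (ω : List B), ω.length ≤ n → ∃ q, q.Sublist ω ∧ cs.IsReduced q ∧ π q = π ω := by
  intro n
  induction n with
  | zero =>
      intro ω h
      have : ω = [] := List.eq_nil_of_length_eq_zero (Nat.le_zero.mp h)
      subst this
      exact ⟨[], List.Sublist.refl _, isReduced_nil cs, rfl⟩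
  | succ n ih =>
      intro ω hlen
      by_cases hred : cs.IsReduced ω
      · exact ⟨ω, List.Sublist.refl ω, hred, rfl⟩
      · have hne : ω ≠ [] := by
          rintro rfl
          exact hred (isReduced_nil cs)
        have hlenpos : 0 < ω.length := List.length_pos_iff.mpr hne
        have hP : ∃ j, ¬ cs.IsReduced (ω.take (j+1)) := by
          refine ⟨ω.length - 1, ?_⟩
          have h1 : ω.length - 1 + 1 = ω.length := by omega
          rw [h1, List.take_length]
          exact hred
        let j := Nat.find hP
        have hPj : ¬ cs.IsReduced (ω.take (j+1)) := Nat.find_spec hP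
        have hwit : ¬ cs.IsReduced (ω.take ((ω.length - 1)+1)) := by
          have h1 : ω.length - 1 + 1 = ω.length := by omega
          rw [h1, List.take_length]
          exact hred
        have hjle : j ≤ ω.length - 1 := Nat.find_le hwit
        have hjlt : j < ω.length := by omega
        have hredj : cs.IsReduced (ω.take j) := by
          rcases Nat.eq_zero_or_pos j with h0 | hpos
          · rw [h0]
            simpa using isReduced_nil cs
          · have hmin := Nat.find_min hP (show j - 1 < j by omega)
            have h1 : j - 1 + 1 = j := by omega
            rw [h1] at hmin
            exact not_not.mp hmin
        have htake : ω.take (j+1) = ω.take j ++ [ω[j]] := by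
          rw [List.take_succ]
          simp [List.getElem?_eq_getElem hjlt]
        have hlentakej : (ω.take j).length = j := by
          simp [List.length_take]
          omega
        have hℓj : ℓ (π (ω.take j)) = j := hredj.trans hlentakej
        have hnotred2 : ℓ (π (ω.take j) * s (ω[j])) + 1 = ℓ (π (ω.take j)) := by
          rcases cs.length_mul_simple (π (ω.take j)) (ω[j]) with h | h
          · exact absurd ((isReduced_concat_iff cs _ _).mpr ⟨hredj, h⟩) (htake ▸ hPj)
          · exact h
        have hlt : ℓ (π (ω.take j) * s (ω[j])) < ℓ (π (ω.take j)) := by omega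
        obtain ⟨k, hk, hkeq⟩ :=
          strong_exchange cs (ω.take j) (cs.isReflection_simple (ω[j])) hlt
        set q₀ := (ω.take j).eraseIdx k ++ ω.drop (j+1) with hq₀
        have hπq₀ : π q₀ = π ω := by
          rw [hq₀, cs.wordProd_append, hkeq]
          have h2 : π ω = π (ω.take (j+1)) * π (ω.drop (j+1)) := by
            rw [← cs.wordProd_append, List.take_append_drop]
          rw [h2, htake, cs.wordProd_append, cs.wordProd_singleton]
        have hsub : q₀.Sublist ω := by
          have h1 : q₀.Sublist (ω.take j ++ ω.drop (j+1)) :=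
            List.Sublist.append (List.eraseIdx_sublist _ k) (List.Sublist.refl _)
          have h2 : (ω.take j ++ ω.drop (j+1)) = ω.eraseIdx j :=
            (List.eraseIdx_eq_take_drop_succ ω j).symm
          rw [h2] at h1
          exact h1.trans (List.eraseIdx_sublist ω j)
        have hlen₀ : q₀.length ≤ n := by
          have h1 : ((ω.take j).eraseIdx k).length = j - 1 := by
            rw [List.length_eraseIdx, hlentakej]
            rw [hlentakej] at hk
            simp [hk]
          have h2 : (ω.drop (j+1)).length = ω.length - (j+1) := by simp
          rw [List.length_append, h1, h2]
          omega
        obtain ⟨q, hq1, hq2, hq3⟩ := ih q₀ hlen₀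
        exact ⟨q, hq1.trans hsub, hq2, hq3.trans hπq₀⟩

theorem exists_reduced_sublist (ω : List B) :
    ∃ q, q.Sublist ω ∧ cs.IsReduced q ∧ π q = π ω :=
  exists_reduced_sublist_aux cs ω.length ω le_rfl

end S5

section S6
variable {B W : Type*} [Group W] {M : CoxeterMatrix B} (cs : CoxeterSystem M W)

local prefix:100 "s" => cs.simple
local prefix:100 "π" => cs.wordProd
local prefix:100 "ℓ" => cs.length

lemma demazureProd_nil : demazureProd cs ([] : List B) = 1 := rfl

lemma demazureProd_concat (q : List B) (i : B) :
    demazureProd cs (q ++ [i])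
      = if ℓ (demazureProd cs q) < ℓ (demazureProd cs q * s i)
        then demazureProd cs q * s i else demazureProd cs q := by
  unfold demazureProd
  rw [List.foldl_append]
  rfl

lemma demazureProd_of_isReduced {q : List B} (h : cs.IsReduced q) :
    demazureProd cs q = π q := by
  induction q using List.reverseRecOn with
  | nil => simp [demazureProd_nil]
  | append_singleton q i ih =>
      obtain ⟨h1, h2⟩ := (isReduced_concat_iff cs q i).mp h
      rw [demazureProd_concat, ih h1]
      rw [if_pos (by omega)]
      rw [cs.wordProd_append, cs.wordProd_singleton]

lemma demazureProd_exists_reduced (r : List B) :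
    ∃ p, p.Sublist r ∧ cs.IsReduced p ∧ π p = demazureProd cs r := by
  induction r using List.reverseRecOn with
  | nil => exact ⟨[], List.Sublist.refl _, isReduced_nil cs, rfl⟩
  | append_singleton r i ih =>
      obtain ⟨p, hp1, hp2, hp3⟩ := ih
      rw [demazureProd_concat]
      by_cases hc : ℓ (demazureProd cs r) < ℓ (demazureProd cs r * s i)
      · rw [if_pos hc]
        refine ⟨p ++ [i], List.Sublist.append hp1 (List.Sublist.refl _), ?_, ?_⟩
        · rw [isReduced_concat_iff]
          refine ⟨hp2, ?_⟩
          rw [hp3]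
          rcases cs.length_mul_simple (demazureProd cs r) i with h | h
          · exact h
          · omega
        · rw [cs.wordProd_append, cs.wordProd_singleton, hp3]
      · rw [if_neg hc]
        exact ⟨p, hp1.trans (List.sublist_append_left r [i]), hp2, hp3⟩

/-- Bruhat order as generated by length-increasing right multiplication by reflections. -/
def chainLE : W → W → Prop :=
  Relation.ReflTransGen (fun a b => ∃ t, cs.IsReflection t ∧ b = a * t ∧ cs.length a < cs.length b)

lemma chainLE_refl (u : W) : chainLE cs u u := Relation.ReflTransGen.refl

lemma chainLE_trans {u v w : W} (h1 : chainLE cs u v) (h2 : chainLE cs v w) :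
    chainLE cs u w := Relation.ReflTransGen.trans h1 h2

lemma chainLE_step {u : W} (i : B) (h : ℓ u < ℓ (u * s i)) :
    chainLE cs u (u * s i) :=
  Relation.ReflTransGen.single ⟨s i, cs.isReflection_simple i, rfl, h⟩

lemma chainLE_length_le {u w : W} (h : chainLE cs u w) : ℓ u ≤ ℓ w := by
  induction h with
  | refl => exact le_rfl
  | tail h1 h2 ih =>
      obtain ⟨t, _, rfl, hlen⟩ := h2
      omega

theorem subword_of_chainLE_aux :
    ∀ n (w : W), ℓ w ≤ n → ∀ ω : List B, cs.IsReduced ω → π ω = w →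
      ∀ u, chainLE cs u w → ∃ q, q.Sublist ω ∧ cs.IsReduced q ∧ π q = u := by
  intro n
  induction n with
  | zero =>
      intro w hw ω hred hπ u hchain
      rcases Relation.ReflTransGen.cases_tail hchain with heq | ⟨v, _, ⟨t, _, rfl, hlen⟩⟩
      · exact ⟨ω, List.Sublist.refl _, hred, by rw [hπ, heq]⟩
      · omega
  | succ n ih =>
      intro w hw ω hred hπ u hchain
      rcases Relation.ReflTransGen.cases_tail hchain with heq | ⟨v, hchain', ⟨t, htrefl, hveq, hlen⟩⟩
      · exact ⟨ω, List.Sublist.refl _, hred, by rw [hπ, heq]⟩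
      · have hwt : π ω * t = v := by
          rw [hπ, hveq, mul_assoc, htrefl.mul_self, mul_one]
        have hlt : ℓ (π ω * t) < ℓ (π ω) := by
          rw [hwt, hπ]
          exact hlen
        obtain ⟨k, hk, hkeq⟩ := strong_exchange cs ω htrefl hlt
        obtain ⟨qv, hqv1, hqv2, hqv3⟩ := exists_reduced_sublist cs (ω.eraseIdx k)
        have hπqv : π qv = v := by rw [hqv3, hkeq, hwt]
        have hvn : ℓ v ≤ n := by omega
        obtain ⟨q, hq1, hq2, hq3⟩ := ih v hvn qv hqv2 hπqv u hchain'
        exact ⟨q, hq1.trans (hqv1.trans (List.eraseIdx_sublist ω k)), hq2, hq3⟩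

theorem subword_of_chainLE {w u : W} (hchain : chainLE cs u w) {ω : List B}
    (hred : cs.IsReduced ω) (hπ : π ω = w) :
    ∃ q, q.Sublist ω ∧ cs.IsReduced q ∧ π q = u :=
  subword_of_chainLE_aux cs (ℓ w) w le_rfl ω hred hπ u hchain

end S6

section S7
variable {B W : Type*} [Group W] {M : CoxeterMatrix B} (cs : CoxeterSystem M W)

local prefix:100 "s" => cs.simple
local prefix:100 "π" => cs.wordProd
local prefix:100 "ℓ" => cs.length

lemma sublist_concat_cases {q m : List B} (i : B) (h : q.Sublist (m ++ [i])) :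
    q.Sublist m ∨ ∃ q₀, q = q₀ ++ [i] ∧ q₀.Sublist m := by
  rcases List.sublist_append_iff.mp h with ⟨l₁, l₂, rfl, h₁, h₂⟩
  rcases List.sublist_singleton.mp h₂ with rfl | rfl
  · left; simpa using h₁
  · right; exact ⟨l₁, rfl, h₁⟩

lemma length_concat_simple_of_lt {a : W} {i : B} (h : ℓ a < ℓ (a * s i)) :
    ℓ (a * s i) = ℓ a + 1 := by
  rcases cs.length_mul_simple a i with h' | h'
  · exact h'
  · omega

lemma length_concat_simple_of_gt {a : W} {i : B} (h : ¬ ℓ a < ℓ (a * s i)) :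
    ℓ (a * s i) + 1 = ℓ a := by
  rcases cs.length_mul_simple a i with h' | h'
  · omega
  · exact h'

lemma mono_aux (n : ℕ)
    (hIH : ∀ m : List B, m.length ≤ n → cs.IsReduced m →
      ∀ q, q.Sublist m → cs.IsReduced q → chainLE cs (π q) (π m))
    {u y : W} (i : B) (hchain : chainLE cs u y) (hyn : ℓ y ≤ n)
    (hu : ℓ u < ℓ (u * s i)) (hy : ℓ y < ℓ (y * s i)) :
    chainLE cs (u * s i) (y * s i) := by
  have key : ∀ a, chainLE cs a y → ℓ a < ℓ (a * s i) → chainLE cs (a * s i) (y * s i) := by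
    intro a0 h0
    refine Relation.ReflTransGen.head_induction_on
      (motive := fun a _ => ℓ a < ℓ (a * s i) → chainLE cs (a * s i) (y * s i))
      h0 (fun _ => chainLE_refl cs _) ?_
    intro a c h' hcy ihc ha
    obtain ⟨t, htr, hceq, hlac⟩ := h'
    subst hceq
    by_cases hc : ℓ (a * t) < ℓ ((a * t) * s i)
    · have h2 := ihc hc
      refine chainLE_trans cs (Relation.ReflTransGen.single ?_) h2
      refine ⟨(s i)⁻¹ * t * ((s i)⁻¹)⁻¹, htr.conj ((s i)⁻¹), ?_, ?_⟩
      · group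
      · rw [length_concat_simple_of_lt cs ha, length_concat_simple_of_lt cs hc]
        omega
    · have hdec : ℓ ((a * t) * s i) + 1 = ℓ (a * t) := length_concat_simple_of_gt cs hc
      set v := a * t with hv
      obtain ⟨m₁, hm₁red, hm₁⟩ := cs.exists_reduced_word' (v * s i)
      have hπm : π (m₁ ++ [i]) = v := by
        rw [cs.wordProd_append, cs.wordProd_singleton, ← hm₁]
        rw [mul_assoc, cs.simple_mul_simple_self, mul_one]
      have hm₂red : cs.IsReduced (m₁ ++ [i]) := by
        rw [isReduced_concat_iff]
        refine ⟨hm₁red, ?_⟩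
        have h3 : π m₁ * s i = v := by
          rw [← hm₁, mul_assoc, cs.simple_mul_simple_self, mul_one]
        rw [h3, ← hm₁]
        omega
      have hav : chainLE cs a v := Relation.ReflTransGen.single ⟨t, htr, rfl, hlac⟩
      obtain ⟨qa, hqa1, hqa2, hqa3⟩ := subword_of_chainLE cs hav hm₂red hπm
      rcases sublist_concat_cases i hqa1 with hqa' | ⟨q₁, rfl, hq₁⟩
      · have hqired : cs.IsReduced (qa ++ [i]) := by
          rw [isReduced_concat_iff]
          exact ⟨hqa2, by rw [hqa3]; exact length_concat_simple_of_lt cs ha⟩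
        have hlen₂ : (m₁ ++ [i]).length ≤ n := by
          have h4 : m₁.length = ℓ (v * s i) := by rw [hm₁red.symm, ← hm₁]
          have h5 : ℓ v ≤ ℓ y := chainLE_length_le cs hcy
          simp [h4]
          omega
        have h6 := hIH (m₁ ++ [i]) hlen₂ hm₂red (qa ++ [i])
          (List.Sublist.append hqa' (List.Sublist.refl _)) hqired
        rw [hπm, cs.wordProd_append, cs.wordProd_singleton, hqa3] at h6
        refine chainLE_trans cs h6 (chainLE_trans cs hcy ?_)
        exact chainLE_step cs i hy
      · exfalso
        obtain ⟨hq₁red, hq₁len⟩ := (isReduced_concat_iff cs q₁ i).mp hqa2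
        have h8 : a = π q₁ * s i := by
          rw [← hqa3, cs.wordProd_append, cs.wordProd_singleton]
        have h9 : a * s i = π q₁ := by
          rw [h8, mul_assoc, cs.simple_mul_simple_self, mul_one]
        rw [h8] at ha
        rw [mul_assoc, cs.simple_mul_simple_self, mul_one] at ha
        omega
  exact key u hchain hu

theorem chainLE_of_sublist_reduced_aux :
    ∀ n, ∀ m : List B, m.length ≤ n → cs.IsReduced m →
      ∀ q, q.Sublist m → cs.IsReduced q → chainLE cs (π q) (π m) := by
  intro n
  induction n with
  | zero =>
      intro m hm _ q hq _
      have : m = [] := List.eq_nil_of_length_eq_zero (Nat.le_zero.mp hm)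
      subst this
      have : q = [] := List.sublist_nil.mp hq
      subst this
      exact chainLE_refl cs _
  | succ n ih =>
      intro m hm hredm q hq hredq
      rcases List.eq_nil_or_concat m with rfl | ⟨m₀, i, rfl⟩
      · have : q = [] := List.sublist_nil.mp hq
        subst this
        exact chainLE_refl cs _
      · rw [List.concat_eq_append] at hredm hq hm ⊢
        obtain ⟨hredm₀, hlm⟩ := (isReduced_concat_iff cs m₀ i).mp hredm
        have hm₀n : m₀.length ≤ n := by
          rw [List.length_append] at hm
          simp at hm
          omega
        rw [cs.wordProd_append, cs.wordProd_singleton]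
        rcases sublist_concat_cases i hq with hq' | ⟨q₀, rfl, hq₀⟩
        · have h1 := ih m₀ hm₀n hredm₀ q hq' hredq
          exact chainLE_trans cs h1 (chainLE_step cs i (by omega))
        · obtain ⟨hredq₀, hlq⟩ := (isReduced_concat_iff cs q₀ i).mp hredq
          have h1 := ih m₀ hm₀n hredm₀ q₀ hq₀ hredq₀
          rw [cs.wordProd_append, cs.wordProd_singleton]
          have hy : ℓ (π m₀) ≤ n := by
            rw [hredm₀]
            omega
          exact mono_aux cs n ih i h1 hy (by omega) (by omega)

theorem chainLE_of_sublist_reduced {m q : List B} (hredm : cs.IsReduced m)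
    (hq : q.Sublist m) (hredq : cs.IsReduced q) : chainLE cs (π q) (π m) :=
  chainLE_of_sublist_reduced_aux cs m.length m le_rfl hredm q hq hredq

lemma chainLE_mono {u x : W} (i : B) (h : chainLE cs u x)
    (hu : ℓ u < ℓ (u * s i)) (hx : ℓ x < ℓ (x * s i)) :
    chainLE cs (u * s i) (x * s i) := by
  obtain ⟨m, hmred, hm⟩ := cs.exists_reduced_word' x
  obtain ⟨q, hq1, hq2, hq3⟩ := subword_of_chainLE cs h hmred hm.symm
  have hmired : cs.IsReduced (m ++ [i]) := by
    rw [isReduced_concat_iff]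
    exact ⟨hmred, by rw [← hm]; exact length_concat_simple_of_lt cs hx⟩
  have hqired : cs.IsReduced (q ++ [i]) := by
    rw [isReduced_concat_iff]
    exact ⟨hq2, by rw [hq3]; exact length_concat_simple_of_lt cs hu⟩
  have h1 := chainLE_of_sublist_reduced cs hmired
    (List.Sublist.append hq1 (List.Sublist.refl [i])) hqired
  rwa [cs.wordProd_append, cs.wordProd_singleton, cs.wordProd_append,
    cs.wordProd_singleton, hq3, ← hm] at h1

lemma chainLE_lift {u x : W} (i : B) (h : chainLE cs u x)
    (hu : ℓ u < ℓ (u * s i)) (hx : ℓ (x * s i) < ℓ x) :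
    chainLE cs (u * s i) x := by
  obtain ⟨m₁, hm₁red, hm₁⟩ := cs.exists_reduced_word' (x * s i)
  have hπm : π (m₁ ++ [i]) = x := by
    rw [cs.wordProd_append, cs.wordProd_singleton, ← hm₁, mul_assoc,
      cs.simple_mul_simple_self, mul_one]
  have hm₂red : cs.IsReduced (m₁ ++ [i]) := by
    rw [isReduced_concat_iff]
    refine ⟨hm₁red, ?_⟩
    have h3 : π m₁ * s i = x := by
      rw [← hm₁, mul_assoc, cs.simple_mul_simple_self, mul_one]
    have hd := length_concat_simple_of_gt cs (show ¬ ℓ x < ℓ (x * s i) by omega)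
    rw [h3, ← hm₁]
    omega
  obtain ⟨qa, hqa1, hqa2, hqa3⟩ := subword_of_chainLE cs h hm₂red hπm
  rcases sublist_concat_cases i hqa1 with hqa' | ⟨q₁, rfl, hq₁⟩
  · have hqired : cs.IsReduced (qa ++ [i]) := by
      rw [isReduced_concat_iff]
      exact ⟨hqa2, by rw [hqa3]; exact length_concat_simple_of_lt cs hu⟩
    have h1 := chainLE_of_sublist_reduced cs hm₂red
      (List.Sublist.append hqa' (List.Sublist.refl [i])) hqired
    rwa [cs.wordProd_append, cs.wordProd_singleton, hqa3, hπm] at h1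
  · exfalso
    obtain ⟨hq₁red, hq₁len⟩ := (isReduced_concat_iff cs q₁ i).mp hqa2
    have h8 : u = π q₁ * s i := by
      rw [← hqa3, cs.wordProd_append, cs.wordProd_singleton]
    have h9 : u * s i = π q₁ := by
      rw [h8, mul_assoc, cs.simple_mul_simple_self, mul_one]
    rw [h8] at hu
    rw [mul_assoc, cs.simple_mul_simple_self, mul_one] at hu
    omega

theorem chainLE_demazureProd (r : List B) :
    ∀ q, q.Sublist r → cs.IsReduced q → chainLE cs (π q) (demazureProd cs r) := by
  induction r using List.reverseRecOn with
  | nil =>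
      intro q hq _
      have : q = [] := List.sublist_nil.mp hq
      subst this
      rw [demazureProd_nil]
      exact chainLE_refl cs _
  | append_singleton r i ih =>
      intro q hq hredq
      rw [demazureProd_concat]
      rcases sublist_concat_cases i hq with hq' | ⟨q₀, rfl, hq₀⟩
      · have h1 := ih q hq' hredq
        by_cases hc : ℓ (demazureProd cs r) < ℓ (demazureProd cs r * s i)
        · rw [if_pos hc]
          exact chainLE_trans cs h1 (chainLE_step cs i hc)
        · rw [if_neg hc]
          exact h1
      · obtain ⟨hredq₀, hlq⟩ := (isReduced_concat_iff cs q₀ i).mp hredq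
        have h1 := ih q₀ hq₀ hredq₀
        rw [cs.wordProd_append, cs.wordProd_singleton]
        by_cases hc : ℓ (demazureProd cs r) < ℓ (demazureProd cs r * s i)
        · rw [if_pos hc]
          exact chainLE_mono cs i h1 (by omega) hc
        · rw [if_neg hc]
          have hlt : ℓ (demazureProd cs r * s i) < ℓ (demazureProd cs r) := by
            have := cs.length_mul_simple_ne (demazureProd cs r) i
            omega
          exact chainLE_lift cs i h1 (by omega) hlt

end S7

end StmtAux

/-- Let `(W, S)` be a finite Coxeter system, `w ∈ W`, `s = (s₁, …, s_l)`
a word in `S`, and `j` a position of `s`. The following are equivalent: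
(a) there is a reduced subexpression of `s` for `w` avoiding position `j` (i.e. a
subword of `s` with position `j` deleted that is a reduced expression for `w`);
(b) there is a sequence of positions avoiding `j` whose corresponding subword has
Demazure product `w`;
(c) the Demazure product `δ((s₁, …, ŝ_j, …, s_l))` of the word with position `j` deleted
is `≥ w` in Bruhat order. -/

theorem stmt9 {B W : Type*} [Group W] [Finite W] {M : CoxeterMatrix B}
    (cs : CoxeterSystem M W) (s : List B) (w : W) (j : Fin s.length) :
    ((∃ q : List B, q.Sublist (s.eraseIdx j) ∧ cs.IsReduced q ∧ cs.wordProd q = w) ↔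
      (∃ t : List B, t.Sublist (s.eraseIdx j) ∧ demazureProd cs t = w)) ∧
    ((∃ t : List B, t.Sublist (s.eraseIdx j) ∧ demazureProd cs t = w) ↔
      bruhatLE cs w (demazureProd cs (s.eraseIdx j))) := by
  classical
  set r := s.eraseIdx j with hr
  refine ⟨⟨?_, ?_⟩, ?_, ?_⟩
  · rintro ⟨q, hq1, hq2, hq3⟩
    exact ⟨q, hq1, by rw [StmtAux.demazureProd_of_isReduced cs hq2, hq3]⟩
  · rintro ⟨t, ht1, ht2⟩
    obtain ⟨p, hp1, hp2, hp3⟩ := StmtAux.demazureProd_exists_reduced cs t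
    exact ⟨p, hp1.trans ht1, hp2, by rw [hp3, ht2]⟩
  · rintro ⟨t, ht1, ht2⟩
    obtain ⟨p, hp1, hp2, hp3⟩ := StmtAux.demazureProd_exists_reduced cs t
    have hchain := StmtAux.chainLE_demazureProd cs r p (hp1.trans ht1) hp2
    rw [hp3, ht2] at hchain
    obtain ⟨pr, hpr1, hpr2, hpr3⟩ := StmtAux.demazureProd_exists_reduced cs r
    obtain ⟨lu, hlu1, hlu2, hlu3⟩ := StmtAux.subword_of_chainLE cs hchain hpr2 hpr3
    exact ⟨pr, hpr2, hpr3, lu, hlu1, hlu2, hlu3⟩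
  · rintro ⟨lw, hlw1, hlw2, lu, hlu1, hlu2, hlu3⟩
    have hchain := StmtAux.chainLE_of_sublist_reduced cs hlw1 hlu1 hlu2
    rw [hlu3, hlw2] at hchain
    obtain ⟨pr, hpr1, hpr2, hpr3⟩ := StmtAux.demazureProd_exists_reduced cs r
    obtain ⟨q, hq1, hq2, hq3⟩ := StmtAux.subword_of_chainLE cs hchain hpr2 hpr3
    exact ⟨q, hq1.trans hpr1, by rw [StmtAux.demazureProd_of_isReduced cs hq2, hq3]⟩
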